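/- Let Z = S^{N-1} with uniform marginal p(z) = |Z|^{-1}, and let h : Z → Z. Then the expected cross-entropy E_{z∼p}[H(p(·|z), q_h(·|z))], where q_h(z̃|z) = C_h(z)^{-1} exp(h(z̃)ᵀh(z)/τ), equals L_align(h;τ) + L_uniform(h;τ) + log|Z|, where L_align(h;τ) = −(1/τ) E_{(z,z̃)∼p(z,z̃)}[h(z̃)ᵀh(z)] and L_uniform(h;τ) = E_{z∼p}[ log E_{z̃∼p}[ exp(h(z̃)ᵀh(z)/τ) ] ]. -/

import Mathlib

open MeasureTheory
open scoped RealInnerProductSpace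

/-- Inner product of two points of the unit sphere, viewed in the ambient space. -/
noncomputable def sphereIP (N : ℕ)
    (x y : Metric.sphere (0 : EuclideanSpace ℝ (Fin N)) 1) : ℝ :=
  ⟪(x : EuclideanSpace ℝ (Fin N)), (y : EuclideanSpace ℝ (Fin N))⟫

/-- with a uniform marginal on the sphere, the expected
cross-entropy between the conditional p(·|z) and the model conditional
q_h(·|z) ∝ exp(h(z')ᵀh(z)/τ) equals L_align + L_uniform + log |Z|. -/
theorem stmt_16 (N : ℕ) (τ : ℝ) (hτ : 0 < τ)
    (μ : Measure (Metric.sphere (0 : EuclideanSpace ℝ (Fin N)) 1))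
    [IsFiniteMeasure μ]
    (hvol : 0 < (μ Set.univ).toReal)
    (h : Metric.sphere (0 : EuclideanSpace ℝ (Fin N)) 1 →
         Metric.sphere (0 : EuclideanSpace ℝ (Fin N)) 1)
    (pc : Metric.sphere (0 : EuclideanSpace ℝ (Fin N)) 1 →
          Metric.sphere (0 : EuclideanSpace ℝ (Fin N)) 1 → ℝ)
    (hpc_nonneg : ∀ z z', 0 ≤ pc z z')
    (hpc1 : ∀ z, ∫ z', pc z z' ∂μ = 1)
    (hint1 : ∀ z, Integrable (fun z' => pc z z' * sphereIP N (h z') (h z)) μ)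
    (hint2 : Integrable (fun z => (μ Set.univ).toReal⁻¹ *
        ∫ z', pc z z' * sphereIP N (h z') (h z) ∂μ) μ)
    (hint3 : Integrable (fun z => (μ Set.univ).toReal⁻¹ *
        Real.log ((μ Set.univ).toReal⁻¹ *
          ∫ z', Real.exp (sphereIP N (h z') (h z) / τ) ∂μ)) μ)
    (hCh_pos : ∀ z, 0 < ∫ z', Real.exp (sphereIP N (h z') (h z) / τ) ∂μ) :
    (∫ z, (μ Set.univ).toReal⁻¹ *
        (-∫ z', pc z z' *
            Real.log ((∫ w, Real.exp (sphereIP N (h w) (h z) / τ) ∂μ)⁻¹ *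
              Real.exp (sphereIP N (h z') (h z) / τ)) ∂μ) ∂μ)
    = (-(1 / τ) * ∫ z, (μ Set.univ).toReal⁻¹ *
          (∫ z', pc z z' * sphereIP N (h z') (h z) ∂μ) ∂μ)
      + (∫ z, (μ Set.univ).toReal⁻¹ *
          Real.log ((μ Set.univ).toReal⁻¹ *
            ∫ z', Real.exp (sphereIP N (h z') (h z) / τ) ∂μ) ∂μ)
      + Real.log (μ Set.univ).toReal := by
  classical
  classical
  set V := (μ Set.univ).toReal with hVdef
  have hV : 0 < V := hvol
  set C : Metric.sphere (0 : EuclideanSpace ℝ (Fin N)) 1 → ℝ :=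
    fun z => ∫ z', Real.exp (sphereIP N (h z') (h z) / τ) ∂μ with hCdef
  set A : Metric.sphere (0 : EuclideanSpace ℝ (Fin N)) 1 → ℝ :=
    fun z => ∫ z', pc z z' * sphereIP N (h z') (h z) ∂μ with hAdef
  have hCpos : ∀ z, 0 < C z := hCh_pos
  -- pc z is integrable
  have hpcInt : ∀ z, Integrable (pc z) μ := by
    intro z
    by_contra hc
    have h1 := hpc1 z
    rw [integral_undef hc] at h1
    exact one_ne_zero h1.symm
  -- inner integral computation
  have inner_eq : ∀ z,
      (-∫ z', pc z z' *
          Real.log ((C z)⁻¹ * Real.exp (sphereIP N (h z') (h z) / τ)) ∂μ)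
      = Real.log (C z) - (1 / τ) * A z := by
    intro z
    have hlog : ∀ z', Real.log ((C z)⁻¹ * Real.exp (sphereIP N (h z') (h z) / τ))
        = -Real.log (C z) + sphereIP N (h z') (h z) / τ := by
      intro z'
      rw [Real.log_mul (inv_ne_zero (hCpos z).ne') (Real.exp_ne_zero _),
        Real.log_inv, Real.log_exp]
    have heq : (fun z' => pc z z' *
        Real.log ((C z)⁻¹ * Real.exp (sphereIP N (h z') (h z) / τ)))
        = fun z' => pc z z' * (-Real.log (C z))
          + (pc z z' * sphereIP N (h z') (h z)) / τ := by
      funext z'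
      rw [hlog z']
      ring
    rw [heq, integral_add ((hpcInt z).mul_const _) ((hint1 z).div_const τ),
      integral_mul_const, integral_div, hpc1 z]
    have hA : (∫ z', pc z z' * sphereIP N (h z') (h z) ∂μ) = A z := rfl
    rw [hA]
    ring
  have key : (fun z => V⁻¹ *
      (-∫ z', pc z z' *
          Real.log ((C z)⁻¹ * Real.exp (sphereIP N (h z') (h z) / τ)) ∂μ))
      = fun z => V⁻¹ * Real.log (C z) - (1 / τ) * (V⁻¹ * A z) := by
    funext z
    rw [inner_eq z]
    ring
  -- integrability of V⁻¹ * log (C z)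
  have hlogVC : ∀ z, Real.log (V⁻¹ * C z) = Real.log V⁻¹ + Real.log (C z) :=
    fun z => Real.log_mul (inv_ne_zero hV.ne') (hCpos z).ne'
  have hlogC_int : Integrable (fun z => V⁻¹ * Real.log (C z)) μ := by
    have h1 := hint3.sub (integrable_const (V⁻¹ * Real.log V⁻¹))
    refine h1.congr (Filter.Eventually.of_forall fun z => ?_)
    show V⁻¹ * Real.log (V⁻¹ * C z) - V⁻¹ * Real.log V⁻¹ = V⁻¹ * Real.log (C z)
    rw [hlogVC z]
    ring
  -- main computation
  rw [key, integral_sub hlogC_int (hint2.const_mul (1 / τ))]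
  have hT : (∫ z, V⁻¹ * Real.log (V⁻¹ * C z) ∂μ)
      = ∫ z, V⁻¹ * Real.log (C z) ∂μ - Real.log V := by
    have heq2 : (fun z => V⁻¹ * Real.log (V⁻¹ * C z))
        = fun z => V⁻¹ * Real.log V⁻¹ + V⁻¹ * Real.log (C z) := by
      funext z; rw [hlogVC z]; ring
    rw [heq2, integral_add (integrable_const _) hlogC_int, integral_const,
      smul_eq_mul, Real.log_inv]
    have hMV : V * (V⁻¹ * -Real.log V) = -Real.log V := by
      rw [← mul_assoc, mul_inv_cancel₀ hV.ne', one_mul]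
    rw [show μ.real Set.univ = V from rfl, hMV]
    ring
  rw [hT, integral_const_mul, integral_const_mul]
  ring
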